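/- Let Λ ⊆ ℤ and c : Λ → ℂ with |c(n)| = 1 for all n, satisfying: c(n₁)·conj(c(n₂)) = c(n₃)·conj(c(n₄)) whenever n₁ - n₂ = n₃ - n₄ with all nᵢ ∈ Λ. Then for every finitely supported sequence a supported in Λ, the sequence b with b_j = c(j)·a_j (and 0 off Λ) satisfies |𝒜(a)(k,t)| = |𝒜(b)(k,t)| for all k ∈ ℤ, t ∈ ℝ. -/

import Mathlib

noncomputable def discAmb (a : ℤ → ℂ) (k : ℤ) (t : ℝ) : ℂ :=
  ∑ᶠ j : ℤ, a j * (starRingEnd ℂ) (a (j - k)) * Complex.exp (Complex.I * j * t)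

theorem stmt7 (Λ : Set ℤ) [DecidablePred (· ∈ Λ)] (c : ℤ → ℂ) (hc : ∀ n ∈ Λ, ‖c n‖ = 1)
    (hcond : ∀ n₁ ∈ Λ, ∀ n₂ ∈ Λ, ∀ n₃ ∈ Λ, ∀ n₄ ∈ Λ, n₁ - n₂ = n₃ - n₄ →
      c n₁ * (starRingEnd ℂ) (c n₂) = c n₃ * (starRingEnd ℂ) (c n₄))
    (a : ℤ → ℂ) (ha : (Function.support a).Finite)
    (haΛ : Function.support a ⊆ Λ)
    (b : ℤ → ℂ) (hb : ∀ j : ℤ, b j = if j ∈ Λ then c j * a j else 0) :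
    ∀ (k : ℤ) (t : ℝ), ‖discAmb a k t‖ = ‖discAmb b k t‖ := by
  intro k t
  -- b j = 0 whenever a j = 0
  have hb0 : ∀ j : ℤ, a j = 0 → b j = 0 := by
    intro j hj
    rw [hb j]
    split <;> simp [hj]
  by_cases hS : ∃ j : ℤ, a j ≠ 0 ∧ a (j - k) ≠ 0
  · obtain ⟨j₀, hj₀, hj₀k⟩ := hS
    have hj₀Λ : j₀ ∈ Λ := haΛ hj₀
    have hj₀kΛ : j₀ - k ∈ Λ := haΛ hj₀k
    set u : ℂ := c j₀ * (starRingEnd ℂ) (c (j₀ - k)) with hu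
    have hterm : ∀ j : ℤ,
        b j * (starRingEnd ℂ) (b (j - k)) * Complex.exp (Complex.I * j * t)
          = u * (a j * (starRingEnd ℂ) (a (j - k)) * Complex.exp (Complex.I * j * t)) := by
      intro j
      by_cases h1 : a j = 0
      · rw [hb0 j h1, h1]; ring
      by_cases h2 : a (j - k) = 0
      · rw [hb0 _ h2, h2]; simp
      have hjΛ : j ∈ Λ := haΛ h1
      have hjkΛ : j - k ∈ Λ := haΛ h2
      have hcj : c j * (starRingEnd ℂ) (c (j - k)) = u :=
        hcond j hjΛ (j - k) hjkΛ j₀ hj₀Λ (j₀ - k) hj₀kΛ (by ring)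
      rw [hb j, hb (j - k), if_pos hjΛ, if_pos hjkΛ, map_mul]
      calc c j * a j * ((starRingEnd ℂ) (c (j - k)) * (starRingEnd ℂ) (a (j - k))) *
              Complex.exp (Complex.I * j * t)
          = (c j * (starRingEnd ℂ) (c (j - k))) *
              (a j * (starRingEnd ℂ) (a (j - k)) * Complex.exp (Complex.I * j * t)) := by ring
        _ = _ := by rw [hcj]
    have hsupp : (Function.support fun j : ℤ =>
        a j * (starRingEnd ℂ) (a (j - k)) * Complex.exp (Complex.I * j * t)).Finite := by
      apply ha.subset
      intro j hj
      simp only [Function.mem_support] at hj ⊢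
      intro h; apply hj; rw [h]; ring
    have : discAmb b k t = u * discAmb a k t := by
      unfold discAmb
      rw [finsum_congr hterm, mul_finsum _ _]
    rw [this, norm_mul]
    have habsu : ‖u‖ = 1 := by
      rw [hu, norm_mul, Complex.norm_conj, hc _ hj₀Λ, hc _ hj₀kΛ, one_mul]
    rw [habsu, one_mul]
  · push_neg at hS
    have h1 : discAmb a k t = 0 := by
      unfold discAmb
      rw [finsum_eq_zero_of_forall_eq_zero]
      intro j
      by_cases h : a j = 0
      · rw [h]; ring
      · rw [hS j h, map_zero]; ring
    have h2 : discAmb b k t = 0 := by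
      unfold discAmb
      rw [finsum_eq_zero_of_forall_eq_zero]
      intro j
      by_cases h : a j = 0
      · rw [hb0 j h]; ring
      · rw [hb0 _ (hS j h), map_zero]; ring
    rw [h1, h2]
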